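/- Let k be a field of characteristic 2, V = k^{2n} with β(v,w) = vᵗSw, S = [[0,I],[I,0]], g = o(2n). For ξ ∈ g*, choose X with ξ(x) = tr(Xx) for all x ∈ g and set T_ξ = X + SXᵗS. Then T_ξ is well-defined, T_ξ ∈ o(2n) (i.e., β(T_ξ v, v) = 0 for all v), the map θ: g* → g, ξ ↦ T_ξ, is a linear bijection, and two elements ξ, ζ ∈ g* are in the same O(2n)-orbit if and only if T_ξ and T_ζ are O(2n)-conjugate. -/

import Mathlib

open Matrix

/-- The even orthogonal Lie algebra `o(2n) = {x : β(xv,v) = 0 ∀v}` as a submodule of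
matrices, where `β(v,w) = vᵀSw`. -/
def oEven {k : Type*} [Field k] {ι : Type*} [Fintype ι] [DecidableEq ι]
    (S : Matrix ι ι k) : Submodule k (Matrix ι ι k) where
  carrier := {x | ∀ v, (x.mulVec v) ⬝ᵥ (S.mulVec v) = 0}
  add_mem' := by
    intro a b ha hb v
    simp [Matrix.add_mulVec, add_dotProduct, ha v, hb v]
  zero_mem' := by intro v; simp
  smul_mem' := by
    intro c x hx v
    simp [Matrix.smul_mulVec, smul_dotProduct, hx v]

set_option linter.unusedSectionVars false

section Aux

variable {k : Type*} [Field k] [CharP k 2] {n : ℕ}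

local notation "ι" => (Fin n ⊕ Fin n)

lemma swap_comm (i j : Fin n ⊕ Fin n) : j = Sum.swap i ↔ i = Sum.swap j := by
  constructor <;> rintro rfl <;> simp

lemma sumSwap_eq_iff (a i : Fin n ⊕ Fin n) : (Sum.swap a = i) ↔ (a = Sum.swap i) := by
  constructor <;> rintro rfl <;> simp

def Sm (n : ℕ) (k : Type*) [Field k] : Matrix (Fin n ⊕ Fin n) (Fin n ⊕ Fin n) k :=
  Matrix.fromBlocks 0 1 1 0

lemma Sm_apply (i j : ι) : Sm n k i j = if j = Sum.swap i then 1 else 0 := by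
  cases i <;> cases j <;>
    simp [Sm, Matrix.fromBlocks, Matrix.one_apply, Sum.swap, eq_comm]

lemma S_mul_apply (A : Matrix ι ι k) (i j : ι) : (Sm n k * A) i j = A (Sum.swap i) j := by
  simp [Matrix.mul_apply, Sm_apply, eq_comm (a := Sum.swap i)]

lemma mul_S_apply (A : Matrix ι ι k) (i j : ι) : (A * Sm n k) i j = A i (Sum.swap j) := by
  simp only [Matrix.mul_apply, Sm_apply, swap_comm, mul_ite, mul_one, mul_zero,
    Finset.sum_ite_eq', Finset.mem_univ, if_true]

lemma S_mul_S : (Sm n k) * (Sm n k) = 1 := by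
  ext i j
  rw [S_mul_apply, Sm_apply, Matrix.one_apply]
  simp [swap_comm, eq_comm]

lemma S_transpose : (Sm n k)ᵀ = Sm n k := by
  ext i j
  rw [Matrix.transpose_apply, Sm_apply, Sm_apply]
  simp [swap_comm]

lemma S_mulVec (v : (Fin n ⊕ Fin n) → k) (i : Fin n ⊕ Fin n) :
    (Sm n k).mulVec v i = v (Sum.swap i) := by
  simp [Matrix.mulVec, dotProduct, Sm_apply]

lemma quadEval (x : Matrix ι ι k) (v : (Fin n ⊕ Fin n) → k) :
    (x.mulVec v) ⬝ᵥ ((Sm n k).mulVec v)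
      = ∑ i : ι, ∑ j : ι, x i j * v j * v (Sum.swap i) := by
  simp only [dotProduct, S_mulVec]
  simp only [Matrix.mulVec, dotProduct, Finset.sum_mul]

lemma mem_oEven_iff (x : Matrix ι ι k) :
    x ∈ oEven (Sm n k) ↔
      ((∀ i j, x (Sum.swap i) j = x (Sum.swap j) i) ∧ ∀ i, x (Sum.swap i) i = 0) := by
  constructor
  · intro hx
    have h1 : ∀ i : ι, x (Sum.swap i) i = 0 := by
      intro i
      have := hx (Pi.single i 1)
      rw [quadEval] at this
      simpa only [Pi.single_apply, mul_ite, mul_one, mul_zero, ite_mul, zero_mul,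
        Finset.sum_ite_eq', Finset.mem_univ, if_true, sumSwap_eq_iff, Finset.sum_ite_irrel,
        Finset.sum_const_zero] using this
    refine ⟨?_, h1⟩
    intro i j
    rcases eq_or_ne i j with rfl | hij
    · rfl
    · have := hx (Pi.single i 1 + Pi.single j 1)
      rw [quadEval] at this
      simp only [Pi.add_apply, Pi.single_apply, add_mul, mul_add, mul_ite, mul_one, mul_zero,
        ite_mul, zero_mul, Finset.sum_add_distrib, Finset.sum_ite_eq', Finset.sum_ite_irrel,
        Finset.sum_const_zero, Finset.mem_univ, if_true, sumSwap_eq_iff, h1, add_zero,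
        zero_add] at this
      have h2 := CharTwo.add_self_eq_zero (x (Sum.swap j) i)
      linear_combination this - h2
  · rintro ⟨hsymm, hdiag⟩ v
    rw [quadEval, ← Finset.sum_product']
    refine Finset.sum_involution (fun p _ => (Sum.swap p.2, Sum.swap p.1)) ?_ ?_ (by simp) (by simp)
    · rintro ⟨i, j⟩ -
      have : x (Sum.swap j) (Sum.swap i) = x i j := by
        have := hsymm (Sum.swap i) j
        simpa using this.symm
      simp only [this, Sum.swap_swap]
      linear_combination (CharTwo.add_self_eq_zero (x i j * v j * v (Sum.swap i)))
    · rintro ⟨i, j⟩ - hf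
      intro h
      apply hf
      have h1 : Sum.swap j = i := congrArg Prod.fst h
      have : x i j = 0 := by
        have := hdiag j; rw [h1] at this; exact this
      simp [this]

lemma mat_eq_of_add_eq_zero {A B : Matrix ι ι k} (h : A + B = 0) : A = B := by
  ext i j
  have : A i j + B i j = 0 := by
    have := congrFun (congrFun h i) j
    simpa using this
  rw [eq_neg_of_add_eq_zero_left this, CharTwo.neg_eq]

lemma trace_mul_eq (A B : Matrix ι ι k) :
    (A * B).trace = ∑ i : ι, ∑ j : ι, A i j * B j i := by
  simp [Matrix.trace, Matrix.diag, Matrix.mul_apply]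

lemma trace_mul_std (A : Matrix ι ι k) (i j : ι) :
    (A * Matrix.single i j (1 : k)).trace = A j i := by
  rw [trace_mul_eq]
  simp [Matrix.single, Matrix.of_apply, mul_ite, ite_and, Finset.sum_ite_eq',
    Finset.sum_ite_irrel, Finset.sum_const_zero]

/-- easy half -/
lemma trace_zero_of_symm {M x : Matrix ι ι k} (hM : Mᵀ = M) (hx : x ∈ oEven (Sm n k)) :
    (Sm n k * M * x).trace = 0 := by
  obtain ⟨hsymm, hdiag⟩ := (mem_oEven_iff x).1 hx
  rw [Matrix.mul_assoc]
  have hMs : ∀ a b, M a b = M b a := fun a b => by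
    conv_lhs => rw [← hM, Matrix.transpose_apply]
  have htr : (Sm n k * (M * x)).trace = ∑ i : ι, (M * x) (Sum.swap i) i := by
    simp [Matrix.trace, Matrix.diag, S_mul_apply]
  rw [htr]
  simp only [Matrix.mul_apply]
  rw [← Finset.sum_product']
  refine Finset.sum_involution (fun p _ => (Sum.swap p.2, Sum.swap p.1)) ?_ ?_ (by simp) (by simp)
  · rintro ⟨i, j⟩ -
    have e1 : M j (Sum.swap i) = M (Sum.swap i) j := hMs _ _
    have e2 : x (Sum.swap i) (Sum.swap j) = x j i := by
      have := hsymm i (Sum.swap j); simpa using this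
    simp [Sum.swap_swap, e1, e2, CharTwo.add_self_eq_zero]
  · rintro ⟨i, j⟩ - hf
    intro h
    apply hf
    have h2 : Sum.swap i = j := congrArg Prod.snd h
    have : x j i = 0 := by rw [← h2]; exact hdiag i
    simp [this]

lemma k_eq_of_add_eq_zero {a b : k} (h : a + b = 0) : a = b := by
  rw [eq_neg_of_add_eq_zero_left h, CharTwo.neg_eq]

lemma SAS_apply (A : Matrix ι ι k) (i j : ι) :
    (Sm n k * A * Sm n k) i j = A (Sum.swap i) (Sum.swap j) := by
  rw [mul_S_apply, S_mul_apply]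

lemma basis_mem (i j : ι) (hij : i ≠ j) :
    Sm n k * (Matrix.single i j (1:k) + Matrix.single j i (1:k)) ∈ oEven (Sm n k) := by
  rw [mem_oEven_iff]
  constructor
  · intro a b
    rw [S_mul_apply, S_mul_apply, Sum.swap_swap, Sum.swap_swap]
    simp only [Matrix.add_apply, Matrix.single, Matrix.of_apply]
    rw [add_comm]
    congr 1 <;> simp [and_comm]
  · intro a
    rw [S_mul_apply, Sum.swap_swap]
    simp only [Matrix.add_apply, Matrix.single, Matrix.of_apply]
    have hc1 : ¬(i = a ∧ j = a) := by rintro ⟨rfl, rfl⟩; exact hij rfl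
    have hc2 : ¬(j = a ∧ i = a) := by rintro ⟨rfl, rfl⟩; exact hij rfl
    simp [hc1, hc2]

/-- the hard half : trace-annihilator implies psi = 0 -/
lemma psi_zero_of_trace_zero {Y : Matrix ι ι k}
    (h : ∀ x ∈ oEven (Sm n k), (Y * x).trace = 0) :
    Y + Sm n k * Yᵀ * Sm n k = 0 := by
  have hsymm : ∀ i j : ι, (Y * Sm n k) i j = (Y * Sm n k) j i := by
    intro i j
    rcases eq_or_ne i j with rfl | hij
    · rfl
    · have := h _ (basis_mem i j hij)
      rw [← Matrix.mul_assoc, mul_add, Matrix.trace_add, trace_mul_std, trace_mul_std] at this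
      exact (k_eq_of_add_eq_zero this).symm
  ext i j
  have h1 : (Y * Sm n k) i (Sum.swap j) = (Y * Sm n k) (Sum.swap j) i := hsymm _ _
  rw [mul_S_apply, mul_S_apply, Sum.swap_swap] at h1
  simp only [Matrix.add_apply, SAS_apply, Matrix.transpose_apply, Matrix.zero_apply]
  rw [← h1]
  exact CharTwo.add_self_eq_zero _

lemma psi_mem (X : Matrix ι ι k) : X + Sm n k * Xᵀ * Sm n k ∈ oEven (Sm n k) := by
  rw [mem_oEven_iff]
  constructor
  · intro a b
    simp only [Matrix.add_apply, SAS_apply, Matrix.transpose_apply, Sum.swap_swap]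
    exact add_comm _ _
  · intro a
    simp only [Matrix.add_apply, SAS_apply, Matrix.transpose_apply, Sum.swap_swap]
    exact CharTwo.add_self_eq_zero _

lemma trace_zero_of_psi_zero {Y : Matrix ι ι k} (hY : Y + Sm n k * Yᵀ * Sm n k = 0)
    {x : Matrix ι ι k} (hx : x ∈ oEven (Sm n k)) : (Y * x).trace = 0 := by
  have hY' : Y = Sm n k * Yᵀ * Sm n k := mat_eq_of_add_eq_zero hY
  have hM : (Sm n k * Y)ᵀ = Sm n k * Y := by
    conv_rhs => rw [hY']
    rw [Matrix.transpose_mul, S_transpose, ← Matrix.mul_assoc, ← Matrix.mul_assoc, S_mul_S,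
      Matrix.one_mul]
  have hYM : Y = Sm n k * (Sm n k * Y) := by
    rw [← Matrix.mul_assoc, S_mul_S, Matrix.one_mul]
  calc (Y * x).trace = (Sm n k * (Sm n k * Y) * x).trace := by rw [← hYM]
    _ = 0 := trace_zero_of_symm hM hx

/-- surjectivity construction -/
lemma psi_surj_aux {x : Matrix ι ι k} (hx : x ∈ oEven (Sm n k)) :
    ∃ X : Matrix ι ι k, X + Sm n k * Xᵀ * Sm n k = x := by
  obtain ⟨hsymm, hdiag⟩ := (mem_oEven_iff x).1 hx
  set e : (Fin n ⊕ Fin n) ≃ Fin (n + n) := finSumFinEquiv with he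
  set M : Matrix ι ι k := Matrix.of fun a b => if e a < e b then x (Sum.swap a) b else 0 with hMdef
  refine ⟨Sm n k * M, ?_⟩
  have hMT : M + Mᵀ = Sm n k * x := by
    ext a b
    simp only [Matrix.add_apply, Matrix.transpose_apply, hMdef, Matrix.of_apply, S_mul_apply]
    rcases eq_or_ne a b with rfl | hab
    · simp [hdiag a]
    · have hee : e a ≠ e b := fun h => hab (e.injective h)
      rcases lt_or_gt_of_ne hee with h1 | h1
      · rw [if_pos h1, if_neg (not_lt.2 h1.le), add_zero]
      · rw [if_neg (not_lt.2 h1.le), if_pos h1, zero_add]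
        exact (hsymm b a).symm ▸ (hsymm a b).symm ▸ (hsymm b a)
  calc Sm n k * M + Sm n k * (Sm n k * M)ᵀ * Sm n k
      = Sm n k * M + Sm n k * (Mᵀ * Sm n k) * Sm n k := by
        rw [Matrix.transpose_mul, S_transpose]
    _ = Sm n k * (M + Mᵀ) := by
        rw [Matrix.mul_assoc, Matrix.mul_assoc, S_mul_S, Matrix.mul_one, Matrix.mul_add]
    _ = x := by rw [hMT, ← Matrix.mul_assoc, S_mul_S, Matrix.one_mul]

def psiL (n : ℕ) (k : Type*) [Field k] : Matrix (Fin n ⊕ Fin n) (Fin n ⊕ Fin n) k →ₗ[k]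
    Matrix (Fin n ⊕ Fin n) (Fin n ⊕ Fin n) k where
  toFun X := X + Sm n k * Xᵀ * Sm n k
  map_add' X Y := by
    rw [Matrix.transpose_add, Matrix.mul_add, Matrix.add_mul]
    abel
  map_smul' c X := by
    rw [Matrix.transpose_smul, Matrix.mul_smul, Matrix.smul_mul, RingHom.id_apply, smul_add]

def psiL' (n : ℕ) (k : Type*) [Field k] [CharP k 2] :
    Matrix (Fin n ⊕ Fin n) (Fin n ⊕ Fin n) k →ₗ[k] oEven (Sm n k) :=
  (psiL n k).codRestrict (oEven (Sm n k)) psi_mem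

def phiL (n : ℕ) (k : Type*) [Field k] : Matrix (Fin n ⊕ Fin n) (Fin n ⊕ Fin n) k →ₗ[k]
    Module.Dual k (oEven (Sm n k)) where
  toFun X := (Matrix.traceLinearMap (Fin n ⊕ Fin n) k k ∘ₗ
          LinearMap.mulLeft k X) ∘ₗ (oEven (Sm n k)).subtype
  map_add' X Y := by
    refine LinearMap.ext fun x => ?_
    simp [LinearMap.mulLeft_apply, Matrix.add_mul]
  map_smul' c X := by
    refine LinearMap.ext fun x => ?_
    simp [LinearMap.mulLeft_apply, Matrix.smul_mul]

lemma trace_fromDual (F : Module.Dual k (Matrix ι ι k)) (m : Matrix ι ι k) :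
    ((Matrix.of fun i j => F (Matrix.single j i (1:k))) * m).trace = F m := by
  rw [trace_mul_eq]
  have : ∀ i j : ι, (Matrix.of fun i j => F (Matrix.single j i (1:k))) i j * m j i
      = F (Matrix.single j i (m j i)) := by
    intro i j
    have hsb : Matrix.single j i (m j i) = m j i • Matrix.single j i (1:k) := by
      rw [smul_single, smul_eq_mul, mul_one]
    rw [Matrix.of_apply, hsb, F.map_smul, smul_eq_mul, mul_comm]
  simp only [this, ← map_sum]
  congr 1
  rw [Finset.sum_comm]
  exact (Matrix.matrix_eq_sum_single m).symm

lemma phiL_surj : Function.Surjective (phiL n k) := by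
  intro f
  obtain ⟨F, hF⟩ := LinearMap.exists_extend f
  refine ⟨Matrix.of fun i j => F (Matrix.single j i (1:k)), ?_⟩
  refine LinearMap.ext fun x => ?_
  have := trace_fromDual F (x : Matrix ι ι k)
  simp only [phiL, LinearMap.coe_mk, AddHom.coe_mk, LinearMap.coe_comp, Function.comp_apply,
    Submodule.coe_subtype, LinearMap.mulLeft_apply, Matrix.traceLinearMap_apply]
  rw [this, ← hF]
  rfl

lemma psiL'_surj : Function.Surjective (psiL' n k) := by
  rintro ⟨x, hx⟩
  obtain ⟨X, hX⟩ := psi_surj_aux hx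
  exact ⟨X, Subtype.ext hX⟩

lemma ker_eq : LinearMap.ker (phiL n k) = LinearMap.ker (psiL' n k) := by
  ext X
  simp only [LinearMap.mem_ker]
  constructor
  · intro h
    refine Subtype.ext ?_
    show X + Sm n k * Xᵀ * Sm n k = 0
    refine psi_zero_of_trace_zero fun x hx => ?_
    have := congrFun (congrArg (fun f => f.toFun) h) ⟨x, hx⟩
    simpa [phiL] using this
  · intro h
    have h0 : X + Sm n k * Xᵀ * Sm n k = 0 := congrArg Subtype.val h
    refine LinearMap.ext fun x => ?_
    simpa [phiL] using trace_zero_of_psi_zero h0 x.2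

noncomputable def thetaE (n : ℕ) (k : Type*) [Field k] [CharP k 2] :
    Module.Dual k (oEven (Sm n k)) ≃ₗ[k] oEven (Sm n k) :=
  (((phiL n k).quotKerEquivOfSurjective phiL_surj).symm.trans
    (Submodule.quotEquivOfEq _ _ ker_eq)).trans
    ((psiL' n k).quotKerEquivOfSurjective psiL'_surj)

lemma thetaE_apply (X : Matrix ι ι k) : (thetaE n k (phiL n k X) : Matrix ι ι k)
    = X + Sm n k * Xᵀ * Sm n k := by
  have h1 : ((phiL n k).quotKerEquivOfSurjective phiL_surj).symm (phiL n k X)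
      = Submodule.Quotient.mk X := by
    rw [LinearEquiv.symm_apply_eq]
    rfl
  have h2 : ((psiL' n k).quotKerEquivOfSurjective psiL'_surj) (Submodule.Quotient.mk X)
      = psiL' n k X := rfl
  simp only [thetaE, LinearEquiv.trans_apply, h1, Submodule.quotEquivOfEq_mk, h2]
  rfl

def Bmm (n : ℕ) (k : Type*) [Field k] : Matrix (Fin n ⊕ Fin n) (Fin n ⊕ Fin n) k :=
  Matrix.fromBlocks 0 1 0 0

lemma B_add_BT : Bmm n k + (Bmm n k)ᵀ = Sm n k := by
  ext i j
  cases i <;> cases j <;>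
    simp [Bmm, Sm, Matrix.fromBlocks, Matrix.one_apply, eq_comm]

lemma dot_mulVec_symm (A : Matrix ι ι k) (u w : (Fin n ⊕ Fin n) → k) :
    w ⬝ᵥ (A.mulVec u) = u ⬝ᵥ (Aᵀ.mulVec w) := by
  simp only [dotProduct, Matrix.mulVec, dotProduct, Matrix.transpose_apply,
    Finset.mul_sum]
  rw [Finset.sum_comm]
  exact Finset.sum_congr rfl fun i _ => Finset.sum_congr rfl fun j _ => by ring

lemma polarize (u w : (Fin n ⊕ Fin n) → k) :
    u ⬝ᵥ ((Bmm n k).mulVec w) + w ⬝ᵥ ((Bmm n k).mulVec u)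
      = u ⬝ᵥ ((Sm n k).mulVec w) := by
  rw [dot_mulVec_symm (Bmm n k) u w, ← B_add_BT, Matrix.add_mulVec, dotProduct_add]

/-- orthogonal implies gᵀ S g = S -/
lemma orth_eq {g : Matrix ι ι k}
    (hg : ∀ v, (g.mulVec v) ⬝ᵥ ((Bmm n k).mulVec (g.mulVec v)) = v ⬝ᵥ ((Bmm n k).mulVec v)) :
    gᵀ * Sm n k * g = Sm n k := by
  have key : ∀ v w, (g.mulVec v) ⬝ᵥ ((Sm n k).mulVec (g.mulVec w))
      = v ⬝ᵥ ((Sm n k).mulVec w) := by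
    intro v w
    have h1 := hg v
    have h2 := hg w
    have h3 := hg (v + w)
    simp only [Matrix.mulVec_add, dotProduct_add, add_dotProduct] at h3
    rw [← polarize, ← polarize (u := v) (w := w)]
    linear_combination h3 - h1 - h2
  ext a b
  have := key (Pi.single a 1) (Pi.single b 1)
  rw [Matrix.mulVec_single_one, Matrix.mulVec_single_one] at this
  change ((fun i => g i a) ⬝ᵥ (Sm n k).mulVec fun i => g i b) = _ at this
  have lhs : (gᵀ * Sm n k * g) a b = ∑ i : ι, g i a * g (Sum.swap i) b := by
    rw [Matrix.mul_assoc, Matrix.mul_apply]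
    refine Finset.sum_congr rfl fun i _ => ?_
    rw [Matrix.transpose_apply, S_mul_apply]
  have rhs1 : ((fun i => g i a) ⬝ᵥ (Sm n k).mulVec fun i => g i b)
      = ∑ i : ι, g i a * g (Sum.swap i) b := by
    simp only [dotProduct, S_mulVec]
  have rhs2 : (Pi.single a 1 ⬝ᵥ (Sm n k).mulVec (Pi.single b (1:k))) = Sm n k a b := by
    rw [single_dotProduct, S_mulVec, one_mul, Sm_apply, Pi.single_apply]
    simp [eq_comm]
  rw [lhs, ← rhs1, this, rhs2]

lemma S_S_cancel (A : Matrix ι ι k) : Sm n k * (Sm n k * A) = A := by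
  rw [← Matrix.mul_assoc, S_mul_S, Matrix.one_mul]

lemma orth_inv {g : Matrix ι ι k} (hgS : gᵀ * Sm n k * g = Sm n k) :
    g⁻¹ = Sm n k * gᵀ * Sm n k := by
  refine Matrix.inv_eq_left_inv ?_
  rw [Matrix.mul_assoc, Matrix.mul_assoc, ← Matrix.mul_assoc gᵀ, hgS, S_mul_S]

lemma conj_psi {g : Matrix ι ι k} (hgS : gᵀ * Sm n k * g = Sm n k)
    (X : Matrix ι ι k) :
    (g * X * g⁻¹) + Sm n k * (g * X * g⁻¹)ᵀ * Sm n k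
      = g * (X + Sm n k * Xᵀ * Sm n k) * g⁻¹ := by
  rw [orth_inv hgS]
  simp only [Matrix.transpose_mul, Matrix.transpose_transpose, S_transpose,
    Matrix.mul_add, Matrix.add_mul, Matrix.mul_assoc, S_S_cancel]

lemma psi_add (A B : Matrix ι ι k) :
    (A + B) + Sm n k * (A + B)ᵀ * Sm n k
      = (A + Sm n k * Aᵀ * Sm n k) + (B + Sm n k * Bᵀ * Sm n k) := by
  rw [Matrix.transpose_add, Matrix.mul_add, Matrix.add_mul]
  abel

lemma trace_conj' (g Xξ x : Matrix ι ι k) :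
    (g * Xξ * g⁻¹ * x).trace = (Xξ * (g⁻¹ * x * g)).trace := by
  have : g * Xξ * g⁻¹ * x = g * (Xξ * g⁻¹ * x) := by simp only [Matrix.mul_assoc]
  rw [this, Matrix.trace_mul_comm]
  simp only [Matrix.mul_assoc]

lemma orbit_iff (Xξ Xζ : Matrix ι ι k) :
    (∃ g : Matrix ι ι k,
        (∀ v, (g.mulVec v) ⬝ᵥ ((Bmm n k).mulVec (g.mulVec v)) = v ⬝ᵥ ((Bmm n k).mulVec v)) ∧
        ∀ x ∈ oEven (Sm n k), (Xξ * (g⁻¹ * x * g)).trace = (Xζ * x).trace) ↔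
      (∃ g : Matrix ι ι k,
        (∀ v, (g.mulVec v) ⬝ᵥ ((Bmm n k).mulVec (g.mulVec v)) = v ⬝ᵥ ((Bmm n k).mulVec v)) ∧
        g * (Xξ + Sm n k * Xξᵀ * Sm n k) * g⁻¹ = Xζ + Sm n k * Xζᵀ * Sm n k) := by
  constructor
  · rintro ⟨g, hgo, h⟩
    have hgS := orth_eq hgo
    refine ⟨g, hgo, ?_⟩
    have key : ∀ x ∈ oEven (Sm n k), ((g * Xξ * g⁻¹ + Xζ) * x).trace = 0 := by
      intro x hx
      rw [Matrix.add_mul, Matrix.trace_add, trace_conj' g Xξ x, h x hx]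
      exact CharTwo.add_self_eq_zero _
    have hz := psi_zero_of_trace_zero key
    rw [psi_add] at hz
    rw [← conj_psi hgS]
    exact mat_eq_of_add_eq_zero hz
  · rintro ⟨g, hgo, h⟩
    have hgS := orth_eq hgo
    refine ⟨g, hgo, fun x hx => ?_⟩
    have hz : (g * Xξ * g⁻¹ + Xζ) + Sm n k * (g * Xξ * g⁻¹ + Xζ)ᵀ * Sm n k = 0 := by
      rw [psi_add, conj_psi hgS, h]
      ext i j
      simp only [Matrix.add_apply, Matrix.zero_apply]
      exact CharTwo.add_self_eq_zero _
    have ht := trace_zero_of_psi_zero hz hx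
    rw [Matrix.add_mul, Matrix.trace_add, trace_conj' g Xξ x] at ht
    exact k_eq_of_add_eq_zero ht


end Aux

/-- characteristic 2, `g = o(2n)`, `S = [[0,I],[I,0]]`,
`α(v) = vᵀBv` with `B = [[0,I],[0,0]]`, `O(2n) = {g : α(gv) = α(v)}`.  For `ξ ∈ g*`
represented by `X` via the trace pairing, `T_ξ = X + SXᵀS` is well-defined, lies in
`o(2n)`, `θ : g* → g, ξ ↦ T_ξ` is a linear bijection, and `ξ, ζ` are in the same
`O(2n)`-orbit iff `T_ξ, T_ζ` are `O(2n)`-conjugate. -/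
theorem even_orthogonal_dual_bijection
    {k : Type*} [Field k] [CharP k 2] (n : ℕ)
    (S B : Matrix (Fin n ⊕ Fin n) (Fin n ⊕ Fin n) k)
    (hS : S = Matrix.fromBlocks 0 1 1 0)
    (hB : B = Matrix.fromBlocks 0 1 0 0) :
    (∀ X X' : Matrix (Fin n ⊕ Fin n) (Fin n ⊕ Fin n) k,
      (∀ x ∈ oEven S, (X * x).trace = (X' * x).trace) →
      X + S * Xᵀ * S = X' + S * X'ᵀ * S) ∧
    (∀ X : Matrix (Fin n ⊕ Fin n) (Fin n ⊕ Fin n) k, X + S * Xᵀ * S ∈ oEven S) ∧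
    (∃ θ : Module.Dual k ↥(oEven S) ≃ₗ[k] ↥(oEven S),
      ∀ X : Matrix (Fin n ⊕ Fin n) (Fin n ⊕ Fin n) k,
        (θ ((Matrix.traceLinearMap (Fin n ⊕ Fin n) k k ∘ₗ
          LinearMap.mulLeft k X) ∘ₗ (oEven S).subtype) : Matrix (Fin n ⊕ Fin n) (Fin n ⊕ Fin n) k)
          = X + S * Xᵀ * S) ∧
    (∀ Xξ Xζ : Matrix (Fin n ⊕ Fin n) (Fin n ⊕ Fin n) k,
      (∃ g : Matrix (Fin n ⊕ Fin n) (Fin n ⊕ Fin n) k,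
        (∀ v, (g.mulVec v) ⬝ᵥ (B.mulVec (g.mulVec v)) = v ⬝ᵥ (B.mulVec v)) ∧
        ∀ x ∈ oEven S, (Xξ * (g⁻¹ * x * g)).trace = (Xζ * x).trace) ↔
      (∃ g : Matrix (Fin n ⊕ Fin n) (Fin n ⊕ Fin n) k,
        (∀ v, (g.mulVec v) ⬝ᵥ (B.mulVec (g.mulVec v)) = v ⬝ᵥ (B.mulVec v)) ∧
        g * (Xξ + S * Xξᵀ * S) * g⁻¹ = Xζ + S * Xζᵀ * S)) := by
  have hS2 : S = Sm n k := hS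
  have hB2 : B = Bmm n k := hB
  subst hS2
  subst hB2
  refine ⟨?_, psi_mem, ⟨thetaE n k, fun X => thetaE_apply X⟩, orbit_iff⟩
  intro X X' h
  have h0 : ∀ x ∈ oEven (Sm n k), ((X + X') * x).trace = 0 := by
    intro x hx
    rw [Matrix.add_mul, Matrix.trace_add, h x hx]
    exact CharTwo.add_self_eq_zero _
  have hz := psi_zero_of_trace_zero h0
  rw [psi_add] at hz
  exact mat_eq_of_add_eq_zero hz
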